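/- Let n, m and m' be nonnegative integers such that n+m is odd and n+m' is even. Then the partisan chocolate game position PC(n,m) is greater than or equal to PC(n,m') in the normal-play game order. -/

import Mathlib

namespace SetTheory

universe u

/-- Pre-games, as in Mathlib (December 2024), which no longer has them. -/
inductive PGame : Type (u + 1)
  | mk : ∀ α β : Type u, (α → PGame) → (β → PGame) → PGame

namespace PGame

/-- The pair `(x ≤ y, x ⧏ y)`, defined by simultaneous recursion as in old Mathlib:
`x ≤ y ↔ (∀ i, xL i ⧏ y) ∧ ∀ j, x ⧏ yR j` and `x ⧏ y ↔ (∃ i, x ≤ yL i) ∨ ∃ j, xR j ≤ y`. -/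
noncomputable def LeLF : PGame.{u} → PGame.{u} → Prop × Prop :=
  fun x => PGame.rec (motive := fun _ => PGame.{u} → Prop × Prop)
    (fun xl xr xL xR IHxL IHxR y =>
      PGame.rec (motive := fun _ => Prop × Prop)
        (fun yl yr yL yR IHyL IHyR =>
          ((∀ i, (IHxL i (mk yl yr yL yR)).2) ∧ ∀ j, (IHyR j).2,
            (∃ i, (IHyL i).1) ∨ ∃ j, (IHxR j (mk yl yr yL yR)).1)) y) x

noncomputable instance : LE PGame.{u} := ⟨fun x y => (LeLF x y).1⟩

end PGame

end SetTheory

open SetTheory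

/-- The partisan chocolate game position `PC n m`.
Left options: `PC n' m` with `n' < n` and `n' + m` even, and `PC n m'` with `m' < m` and
`n + m'` even. Right options: the same with "odd" in place of "even". -/
def PC : ℕ → ℕ → SetTheory.PGame
  | n, m =>
    SetTheory.PGame.mk
      {p : ℕ × ℕ // (p.2 = m ∧ p.1 < n ∧ Even (p.1 + m)) ∨ (p.1 = n ∧ p.2 < m ∧ Even (n + p.2))}
      {p : ℕ × ℕ // (p.2 = m ∧ p.1 < n ∧ Odd (p.1 + m)) ∨ (p.1 = n ∧ p.2 < m ∧ Odd (n + p.2))}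
      (fun p => PC p.1.1 p.1.2)
      (fun p => PC p.1.1 p.1.2)
termination_by n m => n + m
decreasing_by
  all_goals rcases p.2 with ⟨h1, h2, -⟩ | ⟨h1, h2, -⟩ <;> omega

namespace SetTheory

namespace PGame

/-- The "less or fuzzy" relation, the second component of `LeLF`. -/
def LF (x y : PGame.{u}) : Prop := (LeLF x y).2

infix:50 " ⧏ " => LF

theorem mk_le_mk {xl xr : Type u} {xL : xl → PGame.{u}} {xR : xr → PGame.{u}}
    {yl yr : Type u} {yL : yl → PGame.{u}} {yR : yr → PGame.{u}} :
    mk xl xr xL xR ≤ mk yl yr yL yR ↔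
      (∀ i, xL i ⧏ mk yl yr yL yR) ∧ ∀ j, mk xl xr xL xR ⧏ yR j := Iff.rfl

theorem lf_of_le_moveLeft {x : PGame.{u}} {yl yr : Type u} {yL : yl → PGame.{u}}
    {yR : yr → PGame.{u}} (i : yl) (h : x ≤ yL i) : x ⧏ mk yl yr yL yR := by
  cases x
  exact Or.inl ⟨i, h⟩

theorem lf_of_moveRight_le {xl xr : Type u} {xL : xl → PGame.{u}} {xR : xr → PGame.{u}}
    {y : PGame.{u}} (j : xr) (h : xR j ≤ y) : mk xl xr xL xR ⧏ y := by
  cases y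
  exact Or.inr ⟨j, h⟩

end PGame

end SetTheory

/-- The effective index of a position: `n + m`, minus 2 when both coordinates are odd. -/
def Sx (n m : ℕ) : ℕ := if n % 2 = 1 ∧ m % 2 = 1 then n + m - 2 else n + m

lemma Sx_spec (n m : ℕ) :
    (n % 2 = 1 ∧ m % 2 = 1 ∧ Sx n m = n + m - 2) ∨
    ((n % 2 = 0 ∨ m % 2 = 0) ∧ Sx n m = n + m) := by
  unfold Sx
  split_ifs with h
  · exact Or.inl ⟨h.1, h.2, rfl⟩
  · refine Or.inr ⟨?_, rfl⟩
    omega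

lemma PC_def (n m : ℕ) : PC n m =
    SetTheory.PGame.mk
      {p : ℕ × ℕ // (p.2 = m ∧ p.1 < n ∧ Even (p.1 + m)) ∨ (p.1 = n ∧ p.2 < m ∧ Even (n + p.2))}
      {p : ℕ × ℕ // (p.2 = m ∧ p.1 < n ∧ Odd (p.1 + m)) ∨ (p.1 = n ∧ p.2 < m ∧ Odd (n + p.2))}
      (fun p => PC p.1.1 p.1.2)
      (fun p => PC p.1.1 p.1.2) := by
  rw [PC]

open SetTheory.PGame in
lemma key : ∀ (t a b c d : ℕ), a + b + c + d ≤ t →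
    (((a + b) % 2 = 0 → (c + d) % 2 = 0 → Sx c d ≤ Sx a b → PC c d ≤ PC a b) ∧
     ((a + b) % 2 = 1 → (c + d) % 2 = 1 → Sx a b ≤ Sx c d → PC c d ≤ PC a b) ∧
     ((a + b) % 2 = 1 → (c + d) % 2 = 0 → PC c d ≤ PC a b)) := by
  intro t
  induction t with
  | zero =>
    intro a b c d ht
    have ha : a = 0 ∧ b = 0 ∧ c = 0 ∧ d = 0 := by omega
    obtain ⟨rfl, rfl, rfl, rfl⟩ := ha
    refine ⟨fun _ _ _ => ?_, fun h => by omega, fun h => by omega⟩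
    rw [PC_def 0 0, SetTheory.PGame.mk_le_mk]
    constructor
    · rintro ⟨_, ⟨-, h, -⟩ | ⟨-, h, -⟩⟩ <;> omega
    · rintro ⟨_, ⟨-, h, -⟩ | ⟨-, h, -⟩⟩ <;> omega
  | succ t IH =>
    intro a b c d ht
    -- strict lf lemmas at level ≤ t
    have lfA : ∀ a b c d : ℕ, a + b + c + d ≤ t → (a + b) % 2 = 0 → (c + d) % 2 = 0 →
        Sx c d < Sx a b → PC c d ⧏ PC a b := by
      intro a b c d hs hab hcd hS
      have h2 : a ≥ 2 ∨ b ≥ 2 := by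
        rcases Sx_spec a b with ⟨h1, h2, h3⟩ | ⟨h1, h2⟩ <;>
          rcases Sx_spec c d with ⟨k1, k2, k3⟩ | ⟨k1, k2⟩ <;> omega
      rw [PC_def a b]
      rcases h2 with h2 | h2
      · refine PGame.lf_of_le_moveLeft
          (i := ⟨(a - 2, b), Or.inl ⟨rfl, by omega, Nat.even_iff.mpr (by omega)⟩⟩) ?_
        show PC c d ≤ PC (a - 2) b
        refine ((IH (a - 2) b c d (by omega)).1 (by omega) hcd ?_)
        rcases Sx_spec a b with ⟨x1, x2, x3⟩ | ⟨x1, x2⟩ <;>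
          rcases Sx_spec (a - 2) b with ⟨y1, y2, y3⟩ | ⟨y1, y2⟩ <;>
          rcases Sx_spec c d with ⟨z1, z2, z3⟩ | ⟨z1, z2⟩ <;> omega
      · refine PGame.lf_of_le_moveLeft
          (i := ⟨(a, b - 2), Or.inr ⟨rfl, by omega, Nat.even_iff.mpr (by omega)⟩⟩) ?_
        show PC c d ≤ PC a (b - 2)
        refine ((IH a (b - 2) c d (by omega)).1 (by omega) hcd ?_)
        rcases Sx_spec a b with ⟨x1, x2, x3⟩ | ⟨x1, x2⟩ <;>
          rcases Sx_spec a (b - 2) with ⟨y1, y2, y3⟩ | ⟨y1, y2⟩ <;>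
          rcases Sx_spec c d with ⟨z1, z2, z3⟩ | ⟨z1, z2⟩ <;> omega
    have lfB : ∀ a b c d : ℕ, a + b + c + d ≤ t → (a + b) % 2 = 1 → (c + d) % 2 = 1 →
        Sx a b < Sx c d → PC c d ⧏ PC a b := by
      intro a b c d hs hab hcd hS
      have h2 : c ≥ 2 ∨ d ≥ 2 := by
        rcases Sx_spec c d with ⟨h1, h2, h3⟩ | ⟨h1, h2⟩ <;>
          rcases Sx_spec a b with ⟨k1, k2, k3⟩ | ⟨k1, k2⟩ <;> omega
      rw [PC_def c d]
      rcases h2 with h2 | h2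
      · refine PGame.lf_of_moveRight_le
          (j := ⟨(c - 2, d), Or.inl ⟨rfl, by omega, Nat.odd_iff.mpr (by omega)⟩⟩) ?_
        show PC (c - 2) d ≤ PC a b
        refine ((IH a b (c - 2) d (by omega)).2.1 hab (by omega) ?_)
        rcases Sx_spec a b with ⟨x1, x2, x3⟩ | ⟨x1, x2⟩ <;>
          rcases Sx_spec (c - 2) d with ⟨y1, y2, y3⟩ | ⟨y1, y2⟩ <;>
          rcases Sx_spec c d with ⟨z1, z2, z3⟩ | ⟨z1, z2⟩ <;> omega
      · refine PGame.lf_of_moveRight_le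
          (j := ⟨(c, d - 2), Or.inr ⟨rfl, by omega, Nat.odd_iff.mpr (by omega)⟩⟩) ?_
        show PC c (d - 2) ≤ PC a b
        refine ((IH a b c (d - 2) (by omega)).2.1 hab (by omega) ?_)
        rcases Sx_spec a b with ⟨x1, x2, x3⟩ | ⟨x1, x2⟩ <;>
          rcases Sx_spec c (d - 2) with ⟨y1, y2, y3⟩ | ⟨y1, y2⟩ <;>
          rcases Sx_spec c d with ⟨z1, z2, z3⟩ | ⟨z1, z2⟩ <;> omega
    have lfC : ∀ a b c d : ℕ, a + b + c + d ≤ t → (a + b) % 2 = 1 → (c + d) % 2 = 0 →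
        PC c d ⧏ PC a b := by
      intro a b c d hs hab hcd
      rcases le_or_gt (Sx c d) (Sx a b) with hS | hS
      · -- move in (a,b): decrement the odd coordinate by 1
        rw [PC_def a b]
        rcases Nat.mod_two_eq_zero_or_one a with ha | ha
        · -- a even, b odd
          refine PGame.lf_of_le_moveLeft
            (i := ⟨(a, b - 1), Or.inr ⟨rfl, by omega, Nat.even_iff.mpr (by omega)⟩⟩) ?_
          show PC c d ≤ PC a (b - 1)
          refine ((IH a (b - 1) c d (by omega)).1 (by omega) hcd ?_)
          rcases Sx_spec a b with ⟨x1, x2, x3⟩ | ⟨x1, x2⟩ <;>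
            rcases Sx_spec a (b - 1) with ⟨y1, y2, y3⟩ | ⟨y1, y2⟩ <;>
            rcases Sx_spec c d with ⟨z1, z2, z3⟩ | ⟨z1, z2⟩ <;> omega
        · -- a odd, b even
          refine PGame.lf_of_le_moveLeft
            (i := ⟨(a - 1, b), Or.inl ⟨rfl, by omega, Nat.even_iff.mpr (by omega)⟩⟩) ?_
          show PC c d ≤ PC (a - 1) b
          refine ((IH (a - 1) b c d (by omega)).1 (by omega) hcd ?_)
          rcases Sx_spec a b with ⟨x1, x2, x3⟩ | ⟨x1, x2⟩ <;>
            rcases Sx_spec (a - 1) b with ⟨y1, y2, y3⟩ | ⟨y1, y2⟩ <;>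
            rcases Sx_spec c d with ⟨z1, z2, z3⟩ | ⟨z1, z2⟩ <;> omega
      · -- move in (c,d): decrement a positive coordinate by 1
        have hcd1 : c ≥ 1 ∨ d ≥ 1 := by
          rcases Sx_spec c d with ⟨h1, h2, h3⟩ | ⟨h1, h2⟩ <;>
            rcases Sx_spec a b with ⟨k1, k2, k3⟩ | ⟨k1, k2⟩ <;> omega
        rw [PC_def c d]
        rcases Nat.lt_or_ge 0 c with hc | hc
        · refine PGame.lf_of_moveRight_le
            (j := ⟨(c - 1, d), Or.inl ⟨rfl, by omega, Nat.odd_iff.mpr (by omega)⟩⟩) ?_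
          show PC (c - 1) d ≤ PC a b
          refine ((IH a b (c - 1) d (by omega)).2.1 hab (by omega) ?_)
          rcases Sx_spec a b with ⟨x1, x2, x3⟩ | ⟨x1, x2⟩ <;>
            rcases Sx_spec (c - 1) d with ⟨y1, y2, y3⟩ | ⟨y1, y2⟩ <;>
            rcases Sx_spec c d with ⟨z1, z2, z3⟩ | ⟨z1, z2⟩ <;> omega
        · have hd : 0 < d := by omega
          refine PGame.lf_of_moveRight_le
            (j := ⟨(c, d - 1), Or.inr ⟨rfl, by omega, Nat.odd_iff.mpr (by omega)⟩⟩) ?_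
          show PC c (d - 1) ≤ PC a b
          refine ((IH a b c (d - 1) (by omega)).2.1 hab (by omega) ?_)
          rcases Sx_spec a b with ⟨x1, x2, x3⟩ | ⟨x1, x2⟩ <;>
            rcases Sx_spec c (d - 1) with ⟨y1, y2, y3⟩ | ⟨y1, y2⟩ <;>
            rcases Sx_spec c d with ⟨z1, z2, z3⟩ | ⟨z1, z2⟩ <;> omega
    refine ⟨?_, ?_, ?_⟩
    · -- A : even ≤ even
      intro hab hcd hS
      rw [PC_def c d, PC_def a b, SetTheory.PGame.mk_le_mk]
      constructor
      · rintro ⟨⟨p1, p2⟩, hp⟩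
        rw [← PC_def a b]
        obtain ⟨rfl, hlt, hev⟩ | ⟨rfl, hlt, hev⟩ := hp <;> rw [Nat.even_iff] at hev <;> dsimp only at *
        · exact lfA a b p1 p2 (by omega) hab hev
            (by rcases Sx_spec a b with ⟨x1, x2, x3⟩ | ⟨x1, x2⟩ <;>
              rcases Sx_spec p1 p2 with ⟨y1, y2, y3⟩ | ⟨y1, y2⟩ <;>
              rcases Sx_spec c p2 with ⟨z1, z2, z3⟩ | ⟨z1, z2⟩ <;> omega)
        · exact lfA a b p1 p2 (by omega) hab hev
            (by rcases Sx_spec a b with ⟨x1, x2, x3⟩ | ⟨x1, x2⟩ <;>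
              rcases Sx_spec p1 p2 with ⟨y1, y2, y3⟩ | ⟨y1, y2⟩ <;>
              rcases Sx_spec p1 d with ⟨z1, z2, z3⟩ | ⟨z1, z2⟩ <;> omega)
      · rintro ⟨⟨p1, p2⟩, hp⟩
        rw [← PC_def c d]
        obtain ⟨rfl, hlt, hod⟩ | ⟨rfl, hlt, hod⟩ := hp <;> rw [Nat.odd_iff] at hod <;>
          exact lfC p1 p2 c d (by omega) hod hcd
    · -- B : odd ≤ odd
      intro hab hcd hS
      rw [PC_def c d, PC_def a b, SetTheory.PGame.mk_le_mk]
      constructor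
      · rintro ⟨⟨p1, p2⟩, hp⟩
        rw [← PC_def a b]
        obtain ⟨rfl, hlt, hev⟩ | ⟨rfl, hlt, hev⟩ := hp <;> rw [Nat.even_iff] at hev <;>
          exact lfC a b p1 p2 (by omega) hab hev
      · rintro ⟨⟨p1, p2⟩, hp⟩
        rw [← PC_def c d]
        obtain ⟨rfl, hlt, hod⟩ | ⟨rfl, hlt, hod⟩ := hp <;> rw [Nat.odd_iff] at hod <;> dsimp only at *
        · exact lfB p1 p2 c d (by omega) hod hcd
            (by rcases Sx_spec a p2 with ⟨x1, x2, x3⟩ | ⟨x1, x2⟩ <;>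
              rcases Sx_spec p1 p2 with ⟨y1, y2, y3⟩ | ⟨y1, y2⟩ <;>
              rcases Sx_spec c d with ⟨z1, z2, z3⟩ | ⟨z1, z2⟩ <;> omega)
        · exact lfB p1 p2 c d (by omega) hod hcd
            (by rcases Sx_spec p1 b with ⟨x1, x2, x3⟩ | ⟨x1, x2⟩ <;>
              rcases Sx_spec p1 p2 with ⟨y1, y2, y3⟩ | ⟨y1, y2⟩ <;>
              rcases Sx_spec c d with ⟨z1, z2, z3⟩ | ⟨z1, z2⟩ <;> omega)
    · -- C : even ≤ odd
      intro hab hcd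
      rw [PC_def c d, PC_def a b, SetTheory.PGame.mk_le_mk]
      constructor
      · rintro ⟨⟨p1, p2⟩, hp⟩
        rw [← PC_def a b]
        obtain ⟨rfl, hlt, hev⟩ | ⟨rfl, hlt, hev⟩ := hp <;> rw [Nat.even_iff] at hev <;>
          exact lfC a b p1 p2 (by omega) hab hev
      · rintro ⟨⟨p1, p2⟩, hp⟩
        rw [← PC_def c d]
        obtain ⟨rfl, hlt, hod⟩ | ⟨rfl, hlt, hod⟩ := hp <;> rw [Nat.odd_iff] at hod <;>
          exact lfC p1 p2 c d (by omega) hod hcd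

theorem stmt_4 (n m m' : ℕ) (hm : Odd (n + m)) (hm' : Even (n + m')) :
    PC n m' ≤ PC n m := by
  rw [Nat.odd_iff] at hm
  rw [Nat.even_iff] at hm'
  exact (key (n + m + n + m') n m n m' le_rfl).2.2 hm hm'
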